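/- Let (K, K^∨) be a pair of dual reflexive Gorenstein cones of index k with deg^∨ = t_1 + ⋯ + t_k where each t_i ∈ K^∨_(1). Then the vectors t_1, …, t_k are linearly independent over ℝ. -/
import Mathlib


open scoped BigOperators Pointwise

noncomputable section

/-- The standard pairing `⟨x, y⟩ = ∑ i, x i * y i` on `ℝ^d`. -/
def pairR {d : ℕ} (x y : Fin d → ℝ) : ℝ := ∑ i, x i * y i

/-- A point of `ℝ^d` is a lattice point if all of its coordinates are integers. -/
def IsLatticePoint {d : ℕ} (x : Fin d → ℝ) : Prop := ∀ i, ∃ z : ℤ, x i = (z : ℝ)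

/-- The dual cone `K^∨ = {y : ⟨x, y⟩ ≥ 0 for all x ∈ K}`. -/
def dualCone {d : ℕ} (K : Set (Fin d → ℝ)) : Set (Fin d → ℝ) :=
  { y | ∀ x ∈ K, 0 ≤ pairR x y }

/-- A Gorenstein cone with degree element `n` (a lattice point): the set of all
nonnegative real linear combinations of a finite set of lattice points, each pairing
to `1` with `n`, such that `K ∩ (−K) = {0}` and `span K = ℝ^d`. -/
def IsGorensteinCone {d : ℕ} (K : Set (Fin d → ℝ)) (n : Fin d → ℝ) : Prop :=
  IsLatticePoint n ∧
  (∃ S : Finset (Fin d → ℝ),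
      (∀ v ∈ S, IsLatticePoint v ∧ pairR v n = 1) ∧
      K = { x | ∃ c : (Fin d → ℝ) → ℝ, (∀ v, 0 ≤ c v) ∧ x = ∑ v ∈ S, c v • v }) ∧
  K ∩ (-K) = {0} ∧
  Submodule.span ℝ K = ⊤

/-- `K_(1)`: the lattice points `m ∈ K` with `⟨m, deg^∨⟩ = 1`. -/
def Kone {d : ℕ} (K : Set (Fin d → ℝ)) (degVee : Fin d → ℝ) : Set (Fin d → ℝ) :=
  { m | IsLatticePoint m ∧ m ∈ K ∧ pairR m degVee = 1 }

/-- `K^∨_(1)`: the lattice points `n ∈ K^∨` with `⟨deg, n⟩ = 1`. -/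
def KvOne {d : ℕ} (K : Set (Fin d → ℝ)) (deg : Fin d → ℝ) : Set (Fin d → ℝ) :=
  { n | IsLatticePoint n ∧ n ∈ dualCone K ∧ pairR deg n = 1 }

lemma pairR_sum_right {d k : ℕ} (x : Fin d → ℝ) (t : Fin k → Fin d → ℝ) :
    pairR x (∑ j, t j) = ∑ j, pairR x (t j) := by
  simp only [pairR, Finset.sum_apply, Finset.mul_sum]
  rw [Finset.sum_comm]

lemma pairR_sum_smul_right {d k : ℕ} (x : Fin d → ℝ) (c : Fin k → ℝ) (t : Fin k → Fin d → ℝ) :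
    pairR x (∑ j, c j • t j) = ∑ j, c j * pairR x (t j) := by
  simp only [pairR, Finset.sum_apply, Pi.smul_apply, smul_eq_mul, Finset.mul_sum]
  rw [Finset.sum_comm]
  exact Finset.sum_congr rfl fun j _ => Finset.sum_congr rfl fun i _ => by ring

lemma pairR_finsum_left {d : ℕ} (S : Finset (Fin d → ℝ)) (c : (Fin d → ℝ) → ℝ)
    (y : Fin d → ℝ) :
    pairR (∑ v ∈ S, c v • v) y = ∑ v ∈ S, c v * pairR v y := by
  simp only [pairR, Finset.sum_apply, Pi.smul_apply, smul_eq_mul, Finset.sum_mul,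
    Finset.mul_sum]
  rw [Finset.sum_comm]
  exact Finset.sum_congr rfl fun j _ => Finset.sum_congr rfl fun i _ => by ring

lemma pair_int {d : ℕ} {x y : Fin d → ℝ} (hx : IsLatticePoint x) (hy : IsLatticePoint y) :
    ∃ z : ℤ, pairR x y = (z : ℝ) := by
  choose zx hzx using hx
  choose zy hzy using hy
  refine ⟨∑ i, zx i * zy i, ?_⟩
  unfold pairR
  push_cast
  exact Finset.sum_congr rfl fun i _ => by rw [hzx i, hzy i]

/-- With `deg^∨ = t_1 + ⋯ + t_k`, `t_i ∈ K^∨_(1)`, the vectors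
`t_1, …, t_k` are linearly independent over `ℝ`. -/
theorem stmt3 {d k : ℕ} (K : Set (Fin d → ℝ)) (deg degVee : Fin d → ℝ)
    (hK : IsGorensteinCone K degVee) (hKv : IsGorensteinCone (dualCone K) deg)
    (hk : pairR deg degVee = (k : ℝ))
    (t : Fin k → (Fin d → ℝ)) (ht : ∀ i, t i ∈ KvOne K deg)
    (hdec : degVee = ∑ i, t i) :
    LinearIndependent ℝ t := by
  obtain ⟨hnlat, ⟨S, hSv, hKeq⟩, hpt, hspan⟩ := hK
  have hSK : ∀ v ∈ S, v ∈ K := by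
    intro v hv
    rw [hKeq]
    refine ⟨fun w => if w = v then 1 else 0, ?_, ?_⟩
    · intro w; dsimp only; split <;> norm_num
    · simp only [ite_smul, one_smul, zero_smul, Finset.sum_ite_eq' S v, if_pos hv]
  have hnonneg : ∀ v ∈ S, ∀ j, 0 ≤ pairR v (t j) := fun v hv j =>
    (ht j).2.1 v (hSK v hv)
  have hint : ∀ v ∈ S, ∀ j, ∃ z : ℤ, pairR v (t j) = (z : ℝ) := fun v hv j =>
    pair_int (hSv v hv).1 (ht j).1
  have hsum1 : ∀ v ∈ S, ∑ j, pairR v (t j) = 1 := by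
    intro v hv
    rw [← pairR_sum_right, ← hdec]
    exact (hSv v hv).2
  have hexists : ∀ i, ∃ v ∈ S, pairR v (t i) ≠ 0 := by
    intro i
    by_contra h
    push_neg at h
    have hKzero : ∀ x ∈ K, pairR x (t i) = 0 := by
      intro x hx
      rw [hKeq] at hx
      obtain ⟨c, hc, rfl⟩ := hx
      rw [pairR_finsum_left]
      exact Finset.sum_eq_zero fun v hv => by rw [h v hv, mul_zero]
    let φ : (Fin d → ℝ) →ₗ[ℝ] ℝ :=
      { toFun := fun x => pairR x (t i)
        map_add' := fun x y => by
          simp [pairR, add_mul, Finset.sum_add_distrib]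
        map_smul' := fun r x => by
          simp [pairR, Finset.mul_sum, mul_assoc] }
    have hle : Submodule.span ℝ K ≤ LinearMap.ker φ :=
      Submodule.span_le.2 fun x hx => hKzero x hx
    rw [hspan, top_le_iff, LinearMap.ker_eq_top] at hle
    have h1 : φ deg = 0 := by rw [hle]; rfl
    have h2 : φ deg = 1 := (ht i).2.2
    rw [h1] at h2
    exact one_ne_zero h2.symm
  rw [Fintype.linearIndependent_iff]
  intro c hc i
  obtain ⟨v, hvS, hvne⟩ := hexists i
  have hpos : 0 < pairR v (t i) := lt_of_le_of_ne (hnonneg v hvS i) (Ne.symm hvne)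
  have h1le : (1:ℝ) ≤ pairR v (t i) := by
    obtain ⟨z, hz⟩ := hint v hvS i
    rw [hz] at hpos ⊢
    exact_mod_cast (by exact_mod_cast hpos : (0:ℤ) < z)
  have hzero : ∀ j, j ≠ i → pairR v (t j) = 0 := by
    have hers : ∑ j ∈ Finset.univ.erase i, pairR v (t j)
        = 1 - pairR v (t i) := by
      rw [Finset.sum_erase_eq_sub (Finset.mem_univ i), hsum1 v hvS]
    have hle0 : ∑ j ∈ Finset.univ.erase i, pairR v (t j) ≤ 0 := by
      rw [hers]; linarith
    have hall := (Finset.sum_eq_zero_iff_of_nonneg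
      (fun j _ => hnonneg v hvS j)).1
      (le_antisymm hle0 (Finset.sum_nonneg fun j _ => hnonneg v hvS j))
    intro j hj
    exact hall j (Finset.mem_erase.2 ⟨hj, Finset.mem_univ j⟩)
  have hpv : pairR v (∑ j, c j • t j) = 0 := by rw [hc]; simp [pairR]
  rw [pairR_sum_smul_right] at hpv
  rw [Finset.sum_eq_single i (fun j _ hj => by rw [hzero j hj, mul_zero])
    (fun h => absurd (Finset.mem_univ i) h)] at hpv
  exact (mul_eq_zero.1 hpv).resolve_right hvne
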